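/- arXiv:2112.04660 — 4 statements merged into one kernel-verified Lean document; each statement's English description precedes it below -/
import Mathlib

section
/- Let μ > 0 and let a nonnegative sequence a_k satisfy a_{k+1} ≤ (1 - μβ_k) a_k + C β_k e_k with β_k ∈ (0, 1/μ), C ≥ 0, e_k ≥ 0. If m_K := ∏_{s=0}^{K-1}(1 - μβ_s) → 0, e_K → 0, and m_K ∑_{k=0}^{K-1} β_k e_k / m_{k+1} → 0 as K → ∞, then a_K → 0. -/
theorem stmt_3 (μ C : ℝ) (hμ : 0 < μ) (hC : 0 ≤ C)
    (a β e : ℕ → ℝ) (ha : ∀ k, 0 ≤ a k) (he : ∀ k, 0 ≤ e k)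
    (hβ : ∀ k, β k ∈ Set.Ioo 0 (1 / μ))
    (hrec : ∀ k, a (k + 1) ≤ (1 - μ * β k) * a k + C * β k * e k)
    (hm : Filter.Tendsto (fun K => ∏ s ∈ Finset.range K, (1 - μ * β s))
      Filter.atTop (nhds 0))
    (he0 : Filter.Tendsto e Filter.atTop (nhds 0))
    (hsum : Filter.Tendsto (fun K => (∏ s ∈ Finset.range K, (1 - μ * β s)) *
        ∑ k ∈ Finset.range K, β k * e k / ∏ s ∈ Finset.range (k + 1), (1 - μ * β s))
      Filter.atTop (nhds 0)) :
    Filter.Tendsto a Filter.atTop (nhds 0) := by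
  set m : ℕ → ℝ := fun K => ∏ s ∈ Finset.range K, (1 - μ * β s) with hm_def
  have hfac : ∀ s, 0 < 1 - μ * β s := by
    intro s
    have h := hβ s
    have h2 : μ * β s < μ * (1 / μ) := by
      exact mul_lt_mul_of_pos_left h.2 hμ
    have h3 : μ * (1 / μ) = 1 := by field_simp
    linarith
  have hmpos : ∀ K, 0 < m K := fun K => Finset.prod_pos (fun s _ => hfac s)
  have key : ∀ K, a K ≤ m K * (a 0 + C * ∑ k ∈ Finset.range K, β k * e k / m (k + 1)) := by
    intro K
    induction K with
    | zero => simp [hm_def]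
    | succ K ih =>
      have h1 := hrec K
      have hmK : m (K + 1) = (1 - μ * β K) * m K := by
        simp only [hm_def, Finset.prod_range_succ]; ring
      have hS : ∑ k ∈ Finset.range (K + 1), β k * e k / m (k + 1)
          = (∑ k ∈ Finset.range K, β k * e k / m (k + 1)) + β K * e K / m (K + 1) :=
        Finset.sum_range_succ _ _
      have h2 : (1 - μ * β K) * a K
          ≤ (1 - μ * β K) * (m K * (a 0 + C * ∑ k ∈ Finset.range K, β k * e k / m (k + 1))) :=
        mul_le_mul_of_nonneg_left ih (le_of_lt (hfac K))
      have h3 : m (K + 1) * (β K * e K / m (K + 1)) = β K * e K := by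
        field_simp
        rw [mul_assoc]; exact mul_div_cancel_left₀ _ (hmpos (K + 1)).ne'
      have : m (K + 1) * (a 0 + C * ∑ k ∈ Finset.range (K + 1), β k * e k / m (k + 1))
          = (1 - μ * β K) * (m K * (a 0 + C * ∑ k ∈ Finset.range K, β k * e k / m (k + 1)))
            + C * (β K * e K) := by
        rw [hS]
        rw [show m (K + 1) * (a 0 + C * ((∑ k ∈ Finset.range K, β k * e k / m (k + 1)) + β K * e K / m (K + 1)))
          = m (K + 1) * (a 0 + C * ∑ k ∈ Finset.range K, β k * e k / m (k + 1))
            + C * (m (K + 1) * (β K * e K / m (K + 1))) from by ring]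
        rw [h3, hmK]; ring
      rw [this]
      calc a (K + 1) ≤ (1 - μ * β K) * a K + C * β K * e K := h1
        _ ≤ _ := by linarith
  have hlim : Filter.Tendsto
      (fun K => m K * (a 0 + C * ∑ k ∈ Finset.range K, β k * e k / m (k + 1)))
      Filter.atTop (nhds 0) := by
    have h1 : Filter.Tendsto (fun K => m K * a 0 + C * (m K * ∑ k ∈ Finset.range K, β k * e k / m (k + 1)))
        Filter.atTop (nhds (0 * a 0 + C * 0)) :=
      (hm.mul_const (a 0)).add (hsum.const_mul C)
    simp only [zero_mul, mul_zero, add_zero] at h1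
    convert h1 using 2 with K
    ring
  exact squeeze_zero ha key hlim
end

section
/- Let G: ℝ^m × ℝ^n → ℝ be C² with ω ↦ G(λ,ω) μ-strongly convex for each λ (μ > 0), and suppose the mixed partial derivative satisfies ‖∂²_{ωλ} G(λ,ω)‖ ≤ C for all (λ,ω). If ω_λ denotes the unique minimizer of G(λ,·), then λ ↦ ω_λ is Lipschitz with constant C/μ: ‖ω_{λ₁} − ω_{λ₂}‖ ≤ (C/μ)‖λ₁ − λ₂‖. -/
open Set

-- quadratic growth at the minimizer
lemma quad_growth {F : Type*} [NormedAddCommGroup F] [NormedSpace ℝ F] {μ : ℝ}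
    {f : F → ℝ} (h : StrongConvexOn Set.univ μ f) {x : F} (hx : ∀ y, f x ≤ f y) (y : F) :
    f x + μ / 2 * ‖x - y‖ ^ 2 ≤ f y := by
  have key : ∀ t ∈ Set.Ioo (0:ℝ) 1, f x + (1 - t) * (μ / 2 * ‖x - y‖ ^ 2) ≤ f y := by
    intro t ht
    obtain ⟨-, hh⟩ := h
    have h2 := hh (Set.mem_univ x) (Set.mem_univ y) (a := 1 - t) (b := t)
      (by linarith [ht.2]) (le_of_lt ht.1) (by ring)
    have h3 : f x ≤ (1 - t) * f x + t * f y - (1 - t) * t * (μ / 2 * ‖x - y‖ ^ 2) := by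
      simpa using le_trans (hx ((1 - t) • x + t • y)) h2
    have ht0 := ht.1
    nlinarith [h3, ht0]
  have hc : Filter.Tendsto (fun t : ℝ => f x + (1 - t) * (μ / 2 * ‖x - y‖ ^ 2))
      (nhdsWithin 0 (Set.Ioi 0)) (nhds (f x + (1 - 0) * (μ / 2 * ‖x - y‖ ^ 2))) := by
    apply Filter.Tendsto.mono_left _ nhdsWithin_le_nhds
    exact ((continuous_const.add ((continuous_const.sub continuous_id).mul
      continuous_const)).tendsto 0)
  have := le_of_tendsto hc (by
    filter_upwards [Ioo_mem_nhdsGT_of_mem (Set.left_mem_Ico.2 one_pos)] with t ht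
    exact key t ht)
  simpa using this

theorem stmt_8 {m n : ℕ} (μ C : ℝ) (hμ : 0 < μ) (hC : 0 ≤ C)
    (G : EuclideanSpace ℝ (Fin m) × EuclideanSpace ℝ (Fin n) → ℝ)
    (hG : ContDiff ℝ 2 G)
    (hconv : ∀ l, StrongConvexOn Set.univ μ (fun w => G (l, w)))
    (hmix : ∀ l w, ‖fderiv ℝ (fun l' => gradient (fun w' => G (l', w')) w) l‖ ≤ C)
    (ω : EuclideanSpace ℝ (Fin m) → EuclideanSpace ℝ (Fin n))
    (hmin : ∀ l w, G (l, ω l) ≤ G (l, w)) :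
    ∀ l₁ l₂, ‖ω l₁ - ω l₂‖ ≤ (C / μ) * ‖l₁ - l₂‖ := by
  intro l₁ l₂
  let E := EuclideanSpace ℝ (Fin m)
  let F := EuclideanSpace ℝ (Fin n)
  have hGd : Differentiable ℝ G := hG.differentiable (by norm_num)
  -- partial differentiability in w
  have hpw : ∀ (l : E), Differentiable ℝ (fun w => G (l, w)) := fun l w =>
    (hGd (l, w)).comp w ((hasFDerivAt_prodMk_right l w).differentiableAt)
  -- fderiv of partial function
  have hfd : ∀ (l : E) (w : F), HasFDerivAt (fun w' => G (l, w'))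
      ((fderiv ℝ G (l, w)).comp (ContinuousLinearMap.inr ℝ E F)) w := fun l w =>
    (hGd (l, w)).hasFDerivAt.comp w (hasFDerivAt_prodMk_right l w)
  have hgrad : ∀ (l : E) (w : F), gradient (fun w' => G (l, w')) w =
      (InnerProductSpace.toDual ℝ F).symm
        ((fderiv ℝ G (l, w)).comp (ContinuousLinearMap.inr ℝ E F)) := by
    intro l w
    rw [gradient, (hfd l w).fderiv]
  -- differentiability of l ↦ gradient
  have hgd : ∀ (w : F), Differentiable ℝ (fun l' => gradient (fun w' => G (l', w')) w) := by
    intro w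
    have h1 : Differentiable ℝ (fderiv ℝ G) :=
      (hG.fderiv_right (m := 1) (by norm_num)).differentiable (by norm_num)
    have h2 : Differentiable ℝ (fun l' : E => fderiv ℝ G (l', w)) :=
      fun l => (h1 (l, w)).comp l ((hasFDerivAt_prodMk_left l w).differentiableAt)
    have h3 : Differentiable ℝ (fun l' : E =>
        (fderiv ℝ G (l', w)).comp (ContinuousLinearMap.inr ℝ E F)) :=
      h2.clm_comp (differentiable_const _)
    have h4 := ((InnerProductSpace.toDual ℝ F).symm.toContinuousLinearEquiv.differentiable).comp h3
    simp only [hgrad]; exact h4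
  -- Lipschitz bound on gradient in l
  have hlip : ∀ (w : F), ‖gradient (fun w' => G (l₁, w')) w - gradient (fun w' => G (l₂, w')) w‖
      ≤ C * ‖l₁ - l₂‖ := by
    intro w
    have := convex_univ.norm_image_sub_le_of_norm_fderiv_le (s := (Set.univ : Set E))
      (f := fun l' => gradient (fun w' => G (l', w')) w)
      (fun x _ => hgd w x) (fun x _ => hmix x w)
      (Set.mem_univ l₂) (Set.mem_univ l₁)
    simpa [norm_sub_rev l₁ l₂] using this
  -- φ = G(l₁,·) - G(l₂,·) MVT
  set d := ‖ω l₁ - ω l₂‖ with hd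
  have hφfd : ∀ w : F, HasFDerivAt (fun w' => G (l₁, w') - G (l₂, w'))
      ((fderiv ℝ G (l₁, w)).comp (ContinuousLinearMap.inr ℝ E F)
        - (fderiv ℝ G (l₂, w)).comp (ContinuousLinearMap.inr ℝ E F)) w :=
    fun w => (hfd l₁ w).sub (hfd l₂ w)
  have hφbound : ∀ w : F, ‖fderiv ℝ (fun w' => G (l₁, w') - G (l₂, w')) w‖ ≤ C * ‖l₁ - l₂‖ := by
    intro w
    rw [(hφfd w).fderiv]
    have := hlip w
    rw [hgrad, hgrad, ← map_sub] at this
    rwa [(InnerProductSpace.toDual ℝ F).symm.norm_map] at this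
  have hmvt : ‖(G (l₁, ω l₂) - G (l₂, ω l₂)) - (G (l₁, ω l₁) - G (l₂, ω l₁))‖
      ≤ (C * ‖l₁ - l₂‖) * d := by
    have := convex_univ.norm_image_sub_le_of_norm_fderiv_le (s := (Set.univ : Set F))
      (f := fun w' => G (l₁, w') - G (l₂, w'))
      (fun x _ => (hφfd x).differentiableAt) (fun x _ => hφbound x)
      (Set.mem_univ (ω l₁)) (Set.mem_univ (ω l₂))
    simpa [hd, norm_sub_rev (ω l₁) (ω l₂)] using this
  -- quadratic growth
  have q1 := quad_growth (hconv l₁) (fun y => hmin l₁ y) (ω l₂)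
  have q2 := quad_growth (hconv l₂) (fun y => hmin l₂ y) (ω l₁)
  have q2' : G (l₂, ω l₂) + μ / 2 * d ^ 2 ≤ G (l₂, ω l₁) := by
    rw [hd, ← norm_sub_rev]; exact q2
  have hsum : μ * d ^ 2 ≤ (G (l₁, ω l₂) - G (l₂, ω l₂)) - (G (l₁, ω l₁) - G (l₂, ω l₁)) := by
    nlinarith [q1, q2']
  have habs := le_trans hsum (le_trans (le_abs_self _) hmvt)
  rcases eq_or_lt_of_le (norm_nonneg (ω l₁ - ω l₂)) with h0 | h0
  · have hd0 : d = 0 := h0.symm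
    rw [hd0]
    positivity
  · have h0' : 0 < d := h0
    have h1 : μ * d ≤ C * ‖l₁ - l₂‖ := by nlinarith [habs, h0']
    rw [div_mul_eq_mul_div, le_div_iff₀ hμ]
    nlinarith [h1]
end

section
/- Let F: ℝ^m × ℝ^n → ℝ with ∂_λ F L₁-Lipschitz in ω, and let J(λ,ω) := ∂²_{ωλ} G(λ,ω) (an m×n matrix) satisfy ‖J(λ,ω)‖ ≤ Γ₁ and ‖J(λ,ω) − J(λ,ω')‖ ≤ L₂‖ω − ω'‖. Fix λ, and let ω*, v* be reference points with ‖v*‖ ≤ M. Then for any ω, v: ‖(∂_λ F(λ,ω) − J(λ,ω)v) − (∂_λ F(λ,ω*) − J(λ,ω*)v*)‖² ≤ (2L₁² + 4M²L₂²)‖ω − ω*‖² + 4Γ₁²‖v − v*‖². -/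
theorem stmt_16 {m n : ℕ} (L₁ L₂ Γ₁ M : ℝ)
    (F : EuclideanSpace ℝ (Fin m) × EuclideanSpace ℝ (Fin n) → ℝ)
    (J : EuclideanSpace ℝ (Fin m) → EuclideanSpace ℝ (Fin n) →
      (EuclideanSpace ℝ (Fin n) →L[ℝ] EuclideanSpace ℝ (Fin m)))
    (hFLip : ∀ l w w', ‖gradient (fun l' => F (l', w)) l -
        gradient (fun l' => F (l', w')) l‖ ≤ L₁ * ‖w - w'‖)
    (hJb : ∀ l w, ‖J l w‖ ≤ Γ₁)
    (hJL : ∀ l w w', ‖J l w - J l w'‖ ≤ L₂ * ‖w - w'‖) :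
    ∀ (l : EuclideanSpace ℝ (Fin m)) (w wstar : EuclideanSpace ℝ (Fin n))
      (v vstar : EuclideanSpace ℝ (Fin n)), ‖vstar‖ ≤ M →
      ‖(gradient (fun l' => F (l', w)) l - J l w v) -
          (gradient (fun l' => F (l', wstar)) l - J l wstar vstar)‖ ^ 2 ≤
        (2 * L₁ ^ 2 + 4 * M ^ 2 * L₂ ^ 2) * ‖w - wstar‖ ^ 2 +
          4 * Γ₁ ^ 2 * ‖v - vstar‖ ^ 2 := by
  intro l w wstar v vstar hv
  set A := gradient (fun l' => F (l', w)) l - gradient (fun l' => F (l', wstar)) l with hA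
  set B := (J l wstar - J l w) vstar with hB
  set C := (J l w) (vstar - v) with hC
  have hEq : (gradient (fun l' => F (l', w)) l - J l w v) -
      (gradient (fun l' => F (l', wstar)) l - J l wstar vstar) = A + B + C := by
    simp only [hA, hB, hC, ContinuousLinearMap.sub_apply, map_sub]
    abel
  have hnA : ‖A‖ ≤ L₁ * ‖w - wstar‖ := hFLip l w wstar
  have hnB : ‖B‖ ≤ L₂ * ‖w - wstar‖ * M := by
    calc ‖B‖ ≤ ‖J l wstar - J l w‖ * ‖vstar‖ := (J l wstar - J l w).le_opNorm vstar
    _ ≤ (L₂ * ‖wstar - w‖) * M := by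
        apply mul_le_mul (hJL l wstar w) hv (norm_nonneg _)
        exact le_trans (norm_nonneg _) (hJL l wstar w)
    _ = L₂ * ‖w - wstar‖ * M := by rw [norm_sub_rev]
  have hnC : ‖C‖ ≤ Γ₁ * ‖v - vstar‖ := by
    calc ‖C‖ ≤ ‖J l w‖ * ‖vstar - v‖ := (J l w).le_opNorm _
    _ ≤ Γ₁ * ‖v - vstar‖ := by
        rw [norm_sub_rev]
        exact mul_le_mul_of_nonneg_right (hJb l w) (norm_nonneg _)
  have htri : ‖A + B + C‖ ≤ ‖A‖ + ‖B‖ + ‖C‖ := norm_add₃_le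
  rw [hEq]
  have h0 : (0:ℝ) ≤ ‖A + B + C‖ := norm_nonneg _
  nlinarith [norm_nonneg A, norm_nonneg B, norm_nonneg C,
    sq_nonneg (‖A‖ - ‖B‖ - ‖C‖), sq_nonneg (‖B‖ - ‖C‖),
    sq_nonneg (L₁ * ‖w - wstar‖ - ‖A‖), sq_nonneg (L₂ * ‖w - wstar‖ * M - ‖B‖),
    sq_nonneg (Γ₁ * ‖v - vstar‖ - ‖C‖),
    mul_self_nonneg (‖A‖ + ‖B‖ + ‖C‖)]
end

section
/- Let η ∈ (0,1), and let d, g, g', random vectors with d⁺ := G + (1−η)(d − G'), where G, G' are unbiased estimators of g, g' (conditioned on d) with variances bounded by σ² and G, G' use the same randomness. Then E‖d⁺ − g‖² ≤ (1−η)² E‖d − g'‖² + 2η² σ² + 2(1−η)² E‖G − G'‖², where the last expectation is over the shared fresh randomness. -/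
open MeasureTheory

set_option maxHeartbeats 1000000 in
theorem stmt_19 {n : ℕ} {Ω : Type*} [MeasurableSpace Ω]
    (μ : Measure Ω) [IsProbabilityMeasure μ]
    (η σ : ℝ) (hη : η ∈ Set.Ioo (0 : ℝ) 1) (hσ : 0 ≤ σ)
    (d g g' : EuclideanSpace ℝ (Fin n))
    (G G' : Ω → EuclideanSpace ℝ (Fin n))
    (hGint : Integrable G μ) (hG'int : Integrable G' μ)
    (hGmean : ∫ ω, G ω ∂μ = g) (hG'mean : ∫ ω, G' ω ∂μ = g')
    (hGvar : ∫ ω, ‖G ω - g‖ ^ 2 ∂μ ≤ σ ^ 2)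
    (hG'var : ∫ ω, ‖G' ω - g'‖ ^ 2 ∂μ ≤ σ ^ 2)
    (hint1 : Integrable (fun ω => ‖G ω + (1 - η) • (d - G' ω) - g‖ ^ 2) μ)
    (hint2 : Integrable (fun ω => ‖G ω - g‖ ^ 2) μ)
    (hint3 : Integrable (fun ω => ‖G' ω - g'‖ ^ 2) μ)
    (hint4 : Integrable (fun ω => ‖G ω - G' ω‖ ^ 2) μ) :
    ∫ ω, ‖G ω + (1 - η) • (d - G' ω) - g‖ ^ 2 ∂μ ≤
      (1 - η) ^ 2 * ‖d - g'‖ ^ 2 + 2 * η ^ 2 * σ ^ 2 +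
        2 * (1 - η) ^ 2 * ∫ ω, ‖G ω - G' ω‖ ^ 2 ∂μ := by
  set a : EuclideanSpace ℝ (Fin n) := (1 - η) • (d - g') with ha
  set B : Ω → EuclideanSpace ℝ (Fin n) :=
    fun ω => η • (G ω - g) + (1 - η) • ((G ω - G' ω) - (g - g')) with hB
  set X : Ω → EuclideanSpace ℝ (Fin n) := fun ω => G ω - G' ω with hX
  set m : EuclideanSpace ℝ (Fin n) := g - g' with hm
  -- pointwise decomposition
  have hdecomp : ∀ ω, G ω + (1 - η) • (d - G' ω) - g = a + B ω := by
    intro ω; simp only [ha, hB]; module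
  -- integrability of B
  have hXint : Integrable X μ := hGint.sub hG'int
  have i1 : Integrable (fun ω => η • (G ω - g)) μ :=
    (hGint.sub (integrable_const g)).smul η
  have i2 : Integrable (fun ω => (1 - η) • (X ω - m)) μ :=
    (hXint.sub (integrable_const m)).smul (1 - η)
  have hBint : Integrable B μ := i1.add i2
  have hGg : ∫ ω, G ω - g ∂μ = 0 := by
    rw [integral_sub hGint (integrable_const g), hGmean, integral_const]; simp
  have hXm : ∫ ω, X ω ∂μ = m := by
    rw [hX, integral_sub hGint hG'int, hGmean, hG'mean]
  have hXmm : ∫ ω, X ω - m ∂μ = 0 := by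
    rw [integral_sub hXint (integrable_const m), hXm, integral_const]; simp
  have hBmean : ∫ ω, B ω ∂μ = 0 := by
    rw [hB, integral_add i1 i2, integral_smul, integral_smul, hGg, hXmm]
    simp
  -- integrability of ‖X - m‖²
  have hXm_sq : ∀ ω, ‖X ω - m‖ ^ 2 =
      ‖X ω‖ ^ 2 - 2 * inner ℝ (X ω) m + ‖m‖ ^ 2 := by
    intro ω
    rw [@norm_sub_sq_real (EuclideanSpace ℝ (Fin n))]
  have iXi : Integrable (fun ω => ‖X ω‖ ^ 2 - 2 * inner ℝ (X ω) m) μ :=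
    hint4.sub ((hXint.inner_const m).const_mul 2)
  have hXmint : Integrable (fun ω => ‖X ω - m‖ ^ 2) μ := by
    exact (iXi.add (integrable_const _)).congr
      (Filter.Eventually.of_forall fun ω => (hXm_sq ω).symm)
  have hinner : ∫ ω, (inner ℝ (X ω) m : ℝ) ∂μ = ‖m‖ ^ 2 := by
    calc ∫ ω, (inner ℝ (X ω) m : ℝ) ∂μ
        = ∫ ω, (inner ℝ m (X ω) : ℝ) ∂μ :=
          integral_congr_ae (Filter.Eventually.of_forall
            fun ω => (real_inner_comm (X ω) m).symm)
      _ = inner ℝ m (∫ ω, X ω ∂μ) := integral_inner hXint m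
      _ = ‖m‖ ^ 2 := by rw [hXm, real_inner_self_eq_norm_sq]
  -- variance bound for X
  have hXvar : ∫ ω, ‖X ω - m‖ ^ 2 ∂μ ≤ ∫ ω, ‖X ω‖ ^ 2 ∂μ := by
    have h1 : ∫ ω, ‖X ω - m‖ ^ 2 ∂μ
        = ∫ ω, ‖X ω‖ ^ 2 ∂μ - 2 * ‖m‖ ^ 2 + ‖m‖ ^ 2 := by
      rw [integral_congr_ae (Filter.Eventually.of_forall hXm_sq),
        integral_add iXi (integrable_const _),
        integral_sub hint4 ((hXint.inner_const m).const_mul 2),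
        integral_const_mul, integral_const, hinner]
      simp; rfl
    nlinarith [sq_nonneg ‖m‖]
  -- pointwise bound for ‖B‖²
  have hBbound : ∀ ω, ‖B ω‖ ^ 2 ≤
      2 * η ^ 2 * ‖G ω - g‖ ^ 2 + 2 * (1 - η) ^ 2 * ‖X ω - m‖ ^ 2 := by
    intro ω
    have h1 : ‖B ω‖ ≤ ‖η • (G ω - g)‖ + ‖(1 - η) • (X ω - m)‖ := norm_add_le _ _
    have h2 : ‖η • (G ω - g)‖ = |η| * ‖G ω - g‖ := norm_smul _ _
    have h3 : ‖(1 - η) • (X ω - m)‖ = |1 - η| * ‖X ω - m‖ := norm_smul _ _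
    have h4 : |η| = η := abs_of_pos hη.1
    have h5 : |1 - η| = 1 - η := abs_of_pos (by linarith [hη.2])
    have h6 : ‖B ω‖ ≤ η * ‖G ω - g‖ + (1 - η) * ‖X ω - m‖ := by
      rw [h2, h3, h4, h5] at h1; exact h1
    have h7 : ‖B ω‖ ^ 2 ≤ (η * ‖G ω - g‖ + (1 - η) * ‖X ω - m‖) ^ 2 :=
      pow_le_pow_left₀ (norm_nonneg _) h6 2
    have key : ∀ p q : ℝ, (η * p + (1 - η) * q) ^ 2
        ≤ 2 * η ^ 2 * p ^ 2 + 2 * (1 - η) ^ 2 * q ^ 2 := by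
      intro p q; nlinarith [sq_nonneg (η * p - (1 - η) * q)]
    exact h7.trans (key _ _)
  -- integrability of ‖B‖²
  have hBsq_ptwise : ∀ ω, ‖B ω‖ ^ 2
      = ‖a + B ω‖ ^ 2 - 2 * inner ℝ a (B ω) - ‖a‖ ^ 2 := by
    intro ω
    have := @norm_add_sq_real (EuclideanSpace ℝ (Fin n)) _ _ a (B ω)
    linarith
  have hint1' : Integrable (fun ω => ‖a + B ω‖ ^ 2) μ :=
    hint1.congr (Filter.Eventually.of_forall fun ω => by
      show ‖G ω + (1 - η) • (d - G' ω) - g‖ ^ 2 = ‖a + B ω‖ ^ 2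
      rw [hdecomp ω])
  have hBsqint : Integrable (fun ω => ‖B ω‖ ^ 2) μ := by
    have h : Integrable (fun ω => ‖a + B ω‖ ^ 2 - 2 * inner ℝ a (B ω) - ‖a‖ ^ 2) μ :=
      (hint1'.sub ((hBint.const_inner a).const_mul 2)).sub (integrable_const _)
    exact h.congr (Filter.Eventually.of_forall fun ω => (hBsq_ptwise ω).symm)
  -- main expansion
  have hmain : ∫ ω, ‖G ω + (1 - η) • (d - G' ω) - g‖ ^ 2 ∂μ
      = ‖a‖ ^ 2 + ∫ ω, ‖B ω‖ ^ 2 ∂μ := by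
    have h1 : ∀ ω, ‖G ω + (1 - η) • (d - G' ω) - g‖ ^ 2
        = ‖a‖ ^ 2 + 2 * inner ℝ a (B ω) + ‖B ω‖ ^ 2 := by
      intro ω; rw [hdecomp ω]
      exact @norm_add_sq_real (EuclideanSpace ℝ (Fin n)) _ _ a (B ω)
    have iC : Integrable (fun ω => ‖a‖ ^ 2 + 2 * inner ℝ a (B ω)) μ :=
      (integrable_const _).add ((hBint.const_inner a).const_mul 2)
    rw [integral_congr_ae (Filter.Eventually.of_forall h1),
      integral_add iC hBsqint,
      integral_add (integrable_const _) ((hBint.const_inner a).const_mul 2),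
      integral_const, integral_const_mul, integral_inner hBint, hBmean]
    simp
  -- bound ∫‖B‖²
  have hBvar : ∫ ω, ‖B ω‖ ^ 2 ∂μ ≤
      2 * η ^ 2 * σ ^ 2 + 2 * (1 - η) ^ 2 * ∫ ω, ‖X ω‖ ^ 2 ∂μ := by
    have step1 : ∫ ω, ‖B ω‖ ^ 2 ∂μ ≤
        ∫ ω, (2 * η ^ 2 * ‖G ω - g‖ ^ 2 + 2 * (1 - η) ^ 2 * ‖X ω - m‖ ^ 2) ∂μ :=
      integral_mono hBsqint
        ((hint2.const_mul _).add (hXmint.const_mul _)) hBbound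
    rw [integral_add (hint2.const_mul _) (hXmint.const_mul _),
      integral_const_mul, integral_const_mul] at step1
    have h2 : 2 * η ^ 2 * ∫ ω, ‖G ω - g‖ ^ 2 ∂μ ≤ 2 * η ^ 2 * σ ^ 2 := by
      apply mul_le_mul_of_nonneg_left hGvar; positivity
    have h3 : 2 * (1 - η) ^ 2 * ∫ ω, ‖X ω - m‖ ^ 2 ∂μ
        ≤ 2 * (1 - η) ^ 2 * ∫ ω, ‖X ω‖ ^ 2 ∂μ := by
      apply mul_le_mul_of_nonneg_left hXvar; positivity
    linarith
  have hanorm : ‖a‖ ^ 2 = (1 - η) ^ 2 * ‖d - g'‖ ^ 2 := by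
    rw [ha, norm_smul, mul_pow, Real.norm_eq_abs, sq_abs]
  rw [hmain, hanorm]
  linarith
end
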